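/- For the finite field F_q, the number of sequences s ∈ F_q^n with a perfect linear complexity profile equals (q-1)^{⌈n/2⌉} · q^{⌊n/2⌋}. -/

import Mathlib

open Polynomial

/-- `f` annihilates the finite sequence `s 1, …, s n`:
`f = 0` or `f_0 s_{j-d} + ⋯ + f_d s_j = 0` for all `d+1 ≤ j ≤ n`, where `d = deg f`. -/
def Annihilates {D : Type*} [CommRing D] (n : ℕ) (s : ℕ → D) (f : Polynomial D) : Prop :=
  f = 0 ∨ ∀ j : ℕ, f.natDegree + 1 ≤ j → j ≤ n →
    ∑ k ∈ Finset.range (f.natDegree + 1), f.coeff k * s (j - f.natDegree + k) = 0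

/-- Linear complexity: minimal degree of a nonzero annihilator of `s 1, …, s n`. -/
noncomputable def LC {D : Type*} [CommRing D] (n : ℕ) (s : ℕ → D) : ℕ :=
  sInf {d | ∃ f : Polynomial D, f ≠ 0 ∧ Annihilates n s f ∧ f.natDegree = d}

/-- A minimal polynomial: a nonzero annihilator of minimal degree. -/
def IsMinPoly {D : Type*} [CommRing D] (n : ℕ) (s : ℕ → D) (μ : Polynomial D) : Prop :=
  μ ≠ 0 ∧ Annihilates n s μ ∧ μ.natDegree = LC n s

/-- Discrepancy `Δ(f, s) = Σ_{k=0}^{d} f_k s_{n-d+k}` where `d = deg f`. -/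
def Disc {D : Type*} [CommRing D] (n : ℕ) (s : ℕ → D) (f : Polynomial D) : D :=
  ∑ k ∈ Finset.range (f.natDegree + 1), f.coeff k * s (n - f.natDegree + k)

/-- The polynomial part `f_2` of the Laurent product `f · (s_1 x^{-1} + ⋯ + s_n x^{-n})`. -/
noncomputable def polyPart {D : Type*} [CommRing D] (n : ℕ) (s : ℕ → D) (f : Polynomial D) :
    Polynomial D :=
  ∑ j ∈ Finset.range f.natDegree,
    Polynomial.C (∑ m ∈ Finset.Icc 1 n, f.coeff (j + m) * s m) * Polynomial.X ^ j

/-- The coefficient of `x^j` (for `j : ℤ`) in the Laurent product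
`f · (s_1 x^{-1} + ⋯ + s_n x^{-n})`. -/
def laurentCoeff {D : Type*} [CommRing D] (n : ℕ) (s : ℕ → D) (f : Polynomial D) (j : ℤ) : D :=
  ∑ m ∈ Finset.Icc 1 n, if 0 ≤ j + (m : ℤ) then f.coeff (j + (m : ℤ)).toNat * s m else 0


set_option maxHeartbeats 1000000

namespace PLCP

variable {F : Type*} [Field F]

def hank (s : ℕ → F) (t : ℕ) : Matrix (Fin t) (Fin t) F :=
  Matrix.of fun i j => s ((i : ℕ) + j + 1)

noncomputable def mpoly (x : ℕ → F) (t : ℕ) : Polynomial F :=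
  X ^ t + ∑ k ∈ Finset.range t, C (x k) * X ^ k

lemma mpoly_coeff (x : ℕ → F) (t k : ℕ) :
    (mpoly x t).coeff k = if k = t then 1 else if k < t then x k else 0 := by
  rw [mpoly, coeff_add, coeff_X_pow, finset_sum_coeff]
  simp only [coeff_C_mul, coeff_X_pow, mul_ite, mul_one, mul_zero]
  rw [Finset.sum_ite_eq (Finset.range t) k x]
  simp only [Finset.mem_range]
  by_cases h1 : k = t <;> by_cases h2 : k < t <;> simp [h1, h2] <;> omega

lemma mpoly_natDegree (x : ℕ → F) (t : ℕ) : (mpoly x t).natDegree = t := by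
  apply le_antisymm
  · rw [natDegree_le_iff_coeff_eq_zero]
    intro m hm
    rw [mpoly_coeff]
    have h1 : ¬ (m = t) := by omega
    have h2 : ¬ (m < t) := by omega
    simp [h1, h2]
  · apply le_natDegree_of_ne_zero
    rw [mpoly_coeff]
    simp

lemma mpoly_ne_zero (x : ℕ → F) (t : ℕ) : mpoly x t ≠ 0 := by
  intro h
  have := mpoly_coeff x t t
  rw [h] at this
  simp at this

lemma mpoly_sum (x : ℕ → F) (s : ℕ → F) (t j : ℕ) (hj : t + 1 ≤ j) :
    ∑ k ∈ Finset.range ((mpoly x t).natDegree + 1),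
      (mpoly x t).coeff k * s (j - (mpoly x t).natDegree + k)
    = (∑ k ∈ Finset.range t, x k * s (j - t + k)) + s j := by
  rw [mpoly_natDegree, Finset.sum_range_succ, mpoly_coeff]
  have h0 : j - t + t = j := by omega
  simp only [h0, if_pos rfl, one_mul, lt_irrefl, if_true, ite_self]
  congr 1
  apply Finset.sum_congr rfl
  intro k hk
  rw [Finset.mem_range] at hk
  rw [mpoly_coeff]
  have h1 : ¬ (k = t) := by omega
  simp [h1, hk]

lemma no_small_annihilator (s : ℕ → F) (m : ℕ) (f : Polynomial F) (hf : f ≠ 0)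
    (hA : Annihilates m s f) (hm : 2 * f.natDegree + 1 ≤ m)
    (hdet : (hank s (f.natDegree + 1)).det ≠ 0) : False := by
  have hA' := hA.resolve_left hf
  set d := f.natDegree with hd
  set v : Fin (d + 1) → F := fun k => f.coeff k with hv
  have hmul : (hank s (d + 1)).mulVec v = 0 := by
    funext i
    have key := hA' (d + 1 + i) (by omega) (by omega)
    have : (hank s (d+1)).mulVec v i =
        ∑ k ∈ Finset.range (d + 1), f.coeff k * s (d + 1 + (i : ℕ) - d + k) := by
      rw [Matrix.mulVec, dotProduct, Finset.sum_range fun k => f.coeff k * s (d + 1 + (i:ℕ) - d + k)]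
      apply Finset.sum_congr rfl
      intro k _
      rw [hank, Matrix.of_apply, mul_comm]
      congr 2
      omega
    rw [Pi.zero_apply, this, key]
  have hvz : v = 0 := by
    by_contra hvne
    exact hdet (Matrix.exists_mulVec_eq_zero_iff.mp ⟨v, hvne, hmul⟩)
  have : f.coeff d = 0 := by
    have := congrFun hvz (Fin.last d)
    simpa [hv, Fin.last] using this
  exact hf (leadingCoeff_eq_zero.mp this)

lemma exists_annihilator (s : ℕ → F) (t : ℕ) (hdet : (hank s t).det ≠ 0) :
    ∃ f : Polynomial F, f ≠ 0 ∧ Annihilates (2 * t) s f ∧ f.natDegree = t := by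
  set M := hank s t with hM
  set b : Fin t → F := fun i => -s (t + 1 + i) with hb
  set x0 : Fin t → F := M⁻¹.mulVec b with hx0
  have hsol : M.mulVec x0 = b := by
    rw [hx0, Matrix.mulVec_mulVec, Matrix.mul_nonsing_inv _ (isUnit_iff_ne_zero.mpr hdet),
      Matrix.one_mulVec]
  set x : ℕ → F := fun k => if h : k < t then x0 ⟨k, h⟩ else 0 with hx
  refine ⟨mpoly x t, mpoly_ne_zero x t, Or.inr ?_, mpoly_natDegree x t⟩
  intro j hj1 hj2
  have hj1' : t + 1 ≤ j := by rwa [mpoly_natDegree] at hj1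
  rw [mpoly_sum x s t j hj1']
  set i : Fin t := ⟨j - t - 1, by omega⟩ with hi
  have key : ∑ k ∈ Finset.range t, x k * s (j - t + k) = M.mulVec x0 i := by
    rw [Matrix.mulVec, dotProduct, Finset.sum_range fun k => x k * s (j - t + k)]
    apply Finset.sum_congr rfl
    intro k _
    rw [hM, hank, Matrix.of_apply, mul_comm, hx]
    simp only [dif_pos k.isLt, Fin.eta]
    congr 2
    have hic : (i : ℕ) = j - t - 1 := rfl
    omega
  rw [key, hsol, hb]
  have hij : t + 1 + (i : ℕ) = j := by simp only [hi]; omega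
  show -s (t + 1 + (i : ℕ)) + s j = 0
  rw [hij, neg_add_cancel]

lemma kernel_annihilator (s : ℕ → F) (u : ℕ)
    (hdet : (hank s (u + 1)).det = 0)
    (hprev : ∀ t, 1 ≤ t → t ≤ u → (hank s t).det ≠ 0) :
    ∃ f : Polynomial F, f ≠ 0 ∧ Annihilates (2 * u + 1) s f ∧ f.natDegree = u := by
  obtain ⟨v, hvne, hmul⟩ := (Matrix.exists_mulVec_eq_zero_iff).mpr hdet
  have hlast : v (Fin.last u) ≠ 0 := by
    intro h0
    apply hvne
    rcases Nat.eq_zero_or_pos u with hu | hu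
    · subst hu; funext i
      have : i = Fin.last 0 := by omega
      rw [this]; exact h0
    · set w : Fin u → F := fun j => v j.castSucc with hw
      have hwmul : (hank s u).mulVec w = 0 := by
        funext i
        have h1 := congrFun hmul (Fin.castSucc i)
        rw [Matrix.mulVec, dotProduct, Fin.sum_univ_castSucc] at h1
        simp only [hank, Matrix.of_apply, Fin.coe_castSucc, Fin.val_last, h0, mul_zero,
          add_zero] at h1
        rw [Pi.zero_apply, Matrix.mulVec, dotProduct]
        simpa [hank, hw] using h1
      have hwz : w = 0 := by
        by_contra hwne
        exact hprev u hu le_rfl (Matrix.exists_mulVec_eq_zero_iff.mp ⟨w, hwne, hwmul⟩)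
      funext i
      refine Fin.lastCases h0 (fun j => ?_) i
      exact congrFun hwz j
  set a := (v (Fin.last u))⁻¹ with ha
  set v' : Fin (u + 1) → F := fun k => a * v k with hv'
  have hv'mul : (hank s (u + 1)).mulVec v' = 0 := by
    funext i
    rw [Matrix.mulVec, dotProduct]
    have := congrFun hmul i
    rw [Matrix.mulVec, dotProduct] at this
    rw [Pi.zero_apply]
    calc ∑ j, hank s (u+1) i j * v' j = a * ∑ j, hank s (u+1) i j * v j := by
          rw [Finset.mul_sum]; apply Finset.sum_congr rfl; intro j _; rw [hv']; ring
      _ = 0 := by rw [this, Pi.zero_apply] at *; rw [this]; ring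
  have hv'last : v' (Fin.last u) = 1 := by
    rw [hv', ha]; exact inv_mul_cancel₀ hlast
  set x : ℕ → F := fun k => if h : k < u then v' ⟨k, by omega⟩ else 0 with hx
  refine ⟨mpoly x u, mpoly_ne_zero x u, Or.inr ?_, mpoly_natDegree x u⟩
  intro j hj1 hj2
  have hj1' : u + 1 ≤ j := by rwa [mpoly_natDegree] at hj1
  have hj2' : j ≤ 2 * u + 1 := hj2
  rw [mpoly_sum x s u j hj1']
  set i : Fin (u + 1) := ⟨j - u - 1, by omega⟩ with hi
  have key : (∑ k ∈ Finset.range u, x k * s (j - u + k)) + s j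
      = (hank s (u + 1)).mulVec v' i := by
    rw [Matrix.mulVec, dotProduct, Fin.sum_univ_castSucc]
    congr 1
    · rw [Finset.sum_range fun k => x k * s (j - u + k)]
      apply Finset.sum_congr rfl
      intro k _
      simp only [hank, Matrix.of_apply, Fin.coe_castSucc, hx]
      rw [dif_pos k.isLt, mul_comm]
      congr 2
      have hic : (i : ℕ) = j - u - 1 := rfl
      omega
    · simp only [hank, Matrix.of_apply, Fin.val_last, hv'last, mul_one]
      congr 1
      have hic : (i : ℕ) = j - u - 1 := rfl
      omega
  rw [key, hv'mul, Pi.zero_apply]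

lemma Annihilates_mono {m m' : ℕ} {s : ℕ → F} {f : Polynomial F} (h : m ≤ m')
    (hA : Annihilates m' s f) : Annihilates m s f := by
  rcases hA with h0 | h1
  · exact Or.inl h0
  · exact Or.inr fun j hj1 hj2 => h1 j hj1 (hj2.trans h)

lemma lc_iff (s : ℕ → F) (n : ℕ) :
    (∀ j, 1 ≤ j → j ≤ n → LC j s = (j + 1) / 2) ↔
    (∀ t, 1 ≤ t → t ≤ (n + 1) / 2 → (hank s t).det ≠ 0) := by
  constructor
  · intro h t
    induction t using Nat.strong_induction_on with
    | _ t ih =>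
      intro ht1 ht2
      by_contra hdet
      try rw [not_ne_iff] at hdet
      obtain ⟨u, rfl⟩ : ∃ u, t = u + 1 := ⟨t - 1, by omega⟩
      have hprev : ∀ t', 1 ≤ t' → t' ≤ u → (hank s t').det ≠ 0 := by
        intro t' h1 h2
        exact ih t' (by omega) h1 (by omega)
      obtain ⟨f, hf, hA, hdeg⟩ := kernel_annihilator s u hdet hprev
      have hle : LC (2 * u + 1) s ≤ u := by
        rw [LC]
        exact Nat.sInf_le ⟨f, hf, hA, hdeg⟩
      have heq := h (2 * u + 1) (by omega) (by omega)
      have : (2 * u + 1 + 1) / 2 = u + 1 := by omega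
      omega
  · intro h j hj1 hj2
    set t := (j + 1) / 2 with htdef
    have ht1 : 1 ≤ t := by omega
    have htn : t ≤ (n + 1) / 2 := by omega
    have hj2t : j ≤ 2 * t := by omega
    have h2tj : 2 * t - 1 ≤ j := by omega
    obtain ⟨f, hf, hA, hdeg⟩ := exists_annihilator s t (h t ht1 htn)
    have hmem : t ∈ {d | ∃ g : Polynomial F, g ≠ 0 ∧ Annihilates j s g ∧ g.natDegree = d} :=
      ⟨f, hf, Annihilates_mono hj2t hA, hdeg⟩
    have hub : LC j s ≤ t := Nat.sInf_le hmem
    have hlb : t ≤ LC j s := by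
      by_contra hlt
      push_neg at hlt
      have hne : {d | ∃ g : Polynomial F, g ≠ 0 ∧ Annihilates j s g ∧ g.natDegree = d}.Nonempty :=
        ⟨t, hmem⟩
      obtain ⟨g, hg, hAg, hdg⟩ := Nat.sInf_mem hne
      have hdlt : g.natDegree < t := by rw [hdg]; exact hlt
      exact no_small_annihilator s j g hg hAg (by omega)
        (h (g.natDegree + 1) (by omega) (by omega))
    omega


section count
variable [Fintype F] [DecidableEq F]

def E (n : ℕ) (s : Fin n → F) : ℕ → F :=
  fun i => if h : 1 ≤ i ∧ i ≤ n then s ⟨i - 1, by have := h.2; omega⟩ else 0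

def Qf (n : ℕ) (s : Fin n → F) : Prop :=
  ∀ t, 1 ≤ t → t ≤ (n + 1) / 2 → (hank (E n s) t).det ≠ 0

lemma hank_congr {s s' : ℕ → F} {t : ℕ} (h : ∀ i, 1 ≤ i → i ≤ 2 * t - 1 → s i = s' i) :
    hank s t = hank s' t := by
  funext i j
  simp only [hank, Matrix.of_apply]
  exact h _ (by omega) (by omega)

lemma E_snoc (n : ℕ) (s : Fin n → F) (c : F) (i : ℕ) (h1 : 1 ≤ i) (h2 : i ≤ n) :
    E (n + 1) (Fin.snoc s c) i = E n s i := by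
  simp only [E, dif_pos (And.intro h1 h2), dif_pos (And.intro h1 (h2.trans n.le_succ))]
  have hlt : i - 1 < n := by omega
  have : (⟨i - 1, by omega⟩ : Fin (n + 1)) = Fin.castSucc ⟨i - 1, hlt⟩ := rfl
  rw [this, Fin.snoc_castSucc]

lemma E_snoc_last (n : ℕ) (s : Fin n → F) (c : F) :
    E (n + 1) (Fin.snoc s c) (n + 1) = c := by
  simp only [E, dif_pos (And.intro (by omega : 1 ≤ n+1) le_rfl)]
  have : (⟨n + 1 - 1, by omega⟩ : Fin (n + 1)) = Fin.last n := rfl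
  rw [this, Fin.snoc_last]

lemma Qf_snoc_odd (n : ℕ) (hodd : n % 2 = 1) (s : Fin n → F) (c : F) :
    Qf (n + 1) (Fin.snoc s c) ↔ Qf n s := by
  have hdiv : (n + 1 + 1) / 2 = (n + 1) / 2 := by omega
  have key : ∀ t, 1 ≤ t → t ≤ (n + 1) / 2 →
      hank (E (n + 1) (Fin.snoc s c)) t = hank (E n s) t := by
    intro t h1 h2
    exact hank_congr fun i hi1 hi2 => E_snoc n s c i hi1 (by omega)
  constructor
  · intro H t h1 h2
    rw [← key t h1 h2]; exact H t h1 (by omega)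
  · intro H t h1 h2
    rw [hdiv] at h2
    rw [key t h1 h2]; exact H t h1 h2

lemma Qf_snoc_even (m : ℕ) (s : Fin (2 * m) → F) (c : F) :
    Qf (2 * m + 1) (Fin.snoc s c) ↔
      Qf (2 * m) s ∧ (hank (E (2 * m + 1) (Fin.snoc s c)) (m + 1)).det ≠ 0 := by
  have hdiv1 : (2 * m + 1 + 1) / 2 = m + 1 := by omega
  have hdiv2 : (2 * m + 1) / 2 = m := by omega
  have key : ∀ t, 1 ≤ t → t ≤ m →
      hank (E (2 * m + 1) (Fin.snoc s c)) t = hank (E (2 * m) s) t := by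
    intro t h1 h2
    exact hank_congr fun i hi1 hi2 => E_snoc (2 * m) s c i hi1 (by omega)
  constructor
  · intro H
    refine ⟨fun t h1 h2 => ?_, H (m + 1) (by omega) (by omega)⟩
    rw [hdiv2] at h2
    rw [← key t h1 h2]; exact H t h1 (by omega)
  · rintro ⟨H1, H2⟩ t h1 h2
    rw [hdiv1] at h2
    rcases Nat.lt_or_ge t (m + 1) with hlt | hge
    · rw [key t h1 (by omega)]; exact H1 t h1 (by omega)
    · have : t = m + 1 := by omega
      rw [this]; exact H2

lemma det_single_last_row {m : ℕ} (A : Matrix (Fin (m + 1)) (Fin (m + 1)) F)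
    (hA : A (Fin.last m) = Pi.single (Fin.last m) 1) :
    A.det = (A.submatrix Fin.castSucc Fin.castSucc).det := by
  rw [Matrix.det_succ_row A (Fin.last m)]
  rw [Finset.sum_eq_single (Fin.last m)]
  · rw [hA]
    simp [Fin.succAbove_last, Even.neg_one_pow ⟨m, rfl⟩, Fin.val_last, ← two_mul]
  · intro b _ hb
    rw [hA, Pi.single_eq_of_ne hb]
    ring
  · intro h; exact absurd (Finset.mem_univ _) h

lemma det_affine (m : ℕ) (s : Fin (2 * m) → F) (c : F) :
    (hank (E (2 * m + 1) (Fin.snoc s c)) (m + 1)).det =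
      c * (hank (E (2 * m) s) m).det +
        (hank (E (2 * m + 1) (Fin.snoc s 0)) (m + 1)).det := by
  set A := hank (E (2 * m + 1) (Fin.snoc s (0 : F))) (m + 1) with hA
  have entry_eq : ∀ (c' : F) (i j : Fin (m + 1)), ((i : ℕ) + j + 1 ≤ 2 * m) →
      hank (E (2 * m + 1) (Fin.snoc s c')) (m + 1) i j = E (2 * m) s ((i : ℕ) + j + 1) := by
    intro c' i j hij
    simp only [hank, Matrix.of_apply]
    have h1 : 1 ≤ (i : ℕ) + j + 1 := by omega
    simp only [E, dif_pos (And.intro h1 (by omega : (i:ℕ)+j+1 ≤ 2*m+1)),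
      dif_pos (And.intro h1 hij)]
    have hlt : (i : ℕ) + j + 1 - 1 < 2 * m := by omega
    have : (⟨(i:ℕ) + j + 1 - 1, by omega⟩ : Fin (2*m+1)) = Fin.castSucc ⟨(i:ℕ)+j+1-1, hlt⟩ := rfl
    rw [this, Fin.snoc_castSucc]
  have corner : ∀ c' : F, hank (E (2 * m + 1) (Fin.snoc s c')) (m + 1) (Fin.last m) (Fin.last m)
      = c' := by
    intro c'
    simp only [hank, Matrix.of_apply, Fin.val_last]
    have : (m : ℕ) + m + 1 = 2 * m + 1 := by omega
    rw [this]
    simp only [E, dif_pos (And.intro (by omega : 1 ≤ 2*m+1) le_rfl)]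
    have : (⟨2 * m + 1 - 1, by omega⟩ : Fin (2*m+1)) = Fin.last (2*m) := rfl
    rw [this, Fin.snoc_last]
  have hrow : hank (E (2 * m + 1) (Fin.snoc s c)) (m + 1) =
      A.updateRow (Fin.last m) (A (Fin.last m) + c • (Pi.single (Fin.last m) 1 : Fin (m+1) → F)) := by
    funext i j
    by_cases hi : i = Fin.last m
    · subst hi
      rw [Matrix.updateRow_self]
      by_cases hj : j = Fin.last m
      · subst hj
        simp only [Pi.add_apply, Pi.smul_apply, Pi.single_eq_same, smul_eq_mul, mul_one,
          corner c, hA, corner (0:F), zero_add]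
      · have hij : (Fin.last m : ℕ) + (j : ℕ) + 1 ≤ 2 * m := by
          have := Fin.val_lt_last hj
          simp only [Fin.val_last]
          omega
        rw [entry_eq c _ _ hij]
        simp only [Pi.add_apply, Pi.smul_apply, Pi.single_eq_of_ne hj, smul_eq_mul, mul_zero,
          add_zero, hA]
        rw [entry_eq 0 _ _ hij]
    · rw [Matrix.updateRow_ne hi]
      have hij : (i : ℕ) + (j : ℕ) + 1 ≤ 2 * m := by
        have := Fin.val_lt_last hi
        try simp only [Fin.val_last] at this
        omega
      rw [entry_eq c _ _ hij, hA, entry_eq 0 _ _ hij]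
  have hsub : A.submatrix Fin.castSucc Fin.castSucc = hank (E (2 * m) s) m := by
    funext i j
    simp only [Matrix.submatrix_apply, hA]
    have hij : (Fin.castSucc i : ℕ) + (Fin.castSucc j : ℕ) + 1 ≤ 2 * m := by
      simp only [Fin.coe_castSucc]; omega
    rw [entry_eq 0 _ _ hij]
    simp only [hank, Matrix.of_apply, Fin.coe_castSucc]
  rw [hrow, Matrix.det_updateRow_add, Matrix.updateRow_eq_self, Matrix.det_updateRow_smul]
  rw [det_single_last_row (A.updateRow (Fin.last m) (Pi.single (Fin.last m) 1))
    (Matrix.updateRow_self)]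
  have : (A.updateRow (Fin.last m) (Pi.single (Fin.last m) 1)).submatrix
      Fin.castSucc Fin.castSucc = A.submatrix Fin.castSucc Fin.castSucc := by
    funext i j
    simp only [Matrix.submatrix_apply]
    rw [Matrix.updateRow_ne (Fin.castSucc_lt_last i).ne]
  rw [this, hsub]
  ring

def snocEquiv {α : Type*} (n : ℕ) (P : (Fin (n + 1) → α) → Prop) :
    {s : Fin (n + 1) → α // P s} ≃ {p : (Fin n → α) × α // P (Fin.snoc p.1 p.2)} where
  toFun s := ⟨(Fin.init s.1, s.1 (Fin.last n)), by
    rw [Fin.snoc_init_self]; exact s.2⟩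
  invFun p := ⟨Fin.snoc p.1.1 p.1.2, p.2⟩
  left_inv s := Subtype.ext (Fin.snoc_init_self s.1)
  right_inv p := Subtype.ext (by
    simp only [Fin.init_snoc, Fin.snoc_last])

def sigmaEquiv {α β : Type*} (P : α → Prop) (D : α → β → Prop) :
    {p : α × β // P p.1 ∧ D p.1 p.2} ≃ Σ a : {a // P a}, {c // D a.1 c} where
  toFun p := ⟨⟨p.1.1, p.2.1⟩, ⟨p.1.2, p.2.2⟩⟩
  invFun x := ⟨(x.1.1, x.2.1), x.1.2, x.2.2⟩
  left_inv _ := rfl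
  right_inv _ := rfl

def prodFstEquiv {α β : Type*} (P : α → Prop) :
    {p : α × β // P p.1} ≃ {a // P a} × β where
  toFun p := (⟨p.1.1, p.2⟩, p.1.2)
  invFun x := ⟨(x.1.1, x.2), x.1.2⟩
  left_inv _ := rfl
  right_inv _ := rfl

lemma card_ne_zero : Nat.card {y : F // y ≠ 0} = Fintype.card F - 1 := by
  rw [Nat.card_eq_fintype_card]
  simp [Fintype.card_subtype_compl]

lemma card_step_odd (n : ℕ) (hodd : n % 2 = 1) :
    Nat.card {s : Fin (n + 1) → F // Qf (n + 1) s} =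
      Nat.card {s : Fin n → F // Qf n s} * Fintype.card F := by
  have e1 := snocEquiv n (Qf (F := F) (n + 1))
  have e2 : {p : (Fin n → F) × F // Qf (n + 1) (Fin.snoc p.1 p.2)} ≃
      {p : (Fin n → F) × F // Qf n p.1} :=
    Equiv.subtypeEquivRight fun p => Qf_snoc_odd n hodd p.1 p.2
  rw [Nat.card_congr ((e1.trans e2).trans (prodFstEquiv (Qf (F := F) n)))]
  rw [Nat.card_prod]
  congr 1
  exact Nat.card_eq_fintype_card

lemma card_step_even (m : ℕ) :
    Nat.card {s : Fin (2 * m + 1) → F // Qf (2 * m + 1) s} =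
      Nat.card {s : Fin (2 * m) → F // Qf (2 * m) s} * (Fintype.card F - 1) := by
  have e1 := snocEquiv (2 * m) (Qf (F := F) (2 * m + 1))
  have e2 : {p : (Fin (2 * m) → F) × F // Qf (2 * m + 1) (Fin.snoc p.1 p.2)} ≃
      {p : (Fin (2 * m) → F) × F // Qf (2 * m) p.1 ∧
        (hank (E (2 * m + 1) (Fin.snoc p.1 p.2)) (m + 1)).det ≠ 0} :=
    Equiv.subtypeEquivRight fun p => Qf_snoc_even m p.1 p.2
  have e3 := sigmaEquiv (Qf (F := F) (2 * m))
    (fun s c => (hank (E (2 * m + 1) (Fin.snoc s c)) (m + 1)).det ≠ 0)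
  -- fiberwise equivalence with {y // y ≠ 0}
  have e4 : ∀ a : {a : Fin (2 * m) → F // Qf (2 * m) a},
      {c : F // (hank (E (2 * m + 1) (Fin.snoc a.1 c)) (m + 1)).det ≠ 0} ≃ {y : F // y ≠ 0} := by
    intro a
    have hDa : (hank (E (2 * m) a.1) m).det ≠ 0 := by
      rcases Nat.eq_zero_or_pos m with hm | hm
      · subst hm
        simp [Matrix.det_fin_zero]
      · exact a.2 m hm (by omega)
    refine Equiv.subtypeEquiv
      ((Equiv.mulLeft₀ _ hDa).trans
        (Equiv.addRight ((hank (E (2 * m + 1) (Fin.snoc a.1 0)) (m + 1)).det))) fun c => ?_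
    rw [det_affine m a.1 c]
    simp only [Equiv.trans_apply, Equiv.coe_addRight]
    have hap : (Equiv.mulLeft₀ _ hDa) c = (hank (E (2 * m) a.1) m).det * c := rfl
    rw [hap, mul_comm]
  rw [Nat.card_congr (((e1.trans e2).trans e3).trans
    ((Equiv.sigmaCongrRight e4).trans (Equiv.sigmaEquivProd _ _)))]
  rw [Nat.card_prod, card_ne_zero]

lemma count (n : ℕ) :
    Nat.card {s : Fin n → F // Qf n s} =
      (Fintype.card F - 1) ^ ((n + 1) / 2) * Fintype.card F ^ (n / 2) := by
  induction n with
  | zero =>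
    have : ∀ s : Fin 0 → F, Qf 0 s := by
      intro s t h1 h2
      omega
    rw [Nat.card_congr (Equiv.subtypeUnivEquiv this)]
    simp
  | succ n ih =>
    rcases Nat.even_or_odd n with ⟨m, hm⟩ | ⟨m, hm⟩
    · have hn : n = 2 * m := by omega
      subst hn
      rw [card_step_even m, ih]
      have h1 : (2 * m + 1 + 1) / 2 = m + 1 := by omega
      have h2 : (2 * m + 1) / 2 = m := by omega
      have h3 : (2 * m) / 2 = m := by omega
      rw [h1, h2, h3, pow_succ]
      ring
    · have hn : n % 2 = 1 := by omega
      rw [card_step_odd n hn, ih]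
      have h1 : (n + 1 + 1) / 2 = m + 1 := by omega
      have h2 : (n + 1) / 2 = m + 1 := by omega
      have h3 : n / 2 = m := by omega
      have h4 : (n + 1) / 2 = m + 1 := by omega
      rw [h1, h2, h3]
      have h5 : (n + 1) / 2 = m + 1 := by omega
      rw [pow_succ]
      ring


end count
end PLCP

theorem stmt_11 (F : Type*) [Field F] [Fintype F] (n : ℕ) :
    Nat.card {s : Fin n → F //
      ∀ j : ℕ, 1 ≤ j → j ≤ n →
        LC j (fun i : ℕ => if h : 1 ≤ i ∧ i ≤ n then s ⟨i - 1, by omega⟩ else 0)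
          = (j + 1) / 2} =
    (Fintype.card F - 1) ^ ((n + 1) / 2) * Fintype.card F ^ (n / 2) := by
  letI : DecidableEq F := Classical.decEq F
  rw [← PLCP.count (F := F) n]
  apply Nat.card_congr
  exact Equiv.subtypeEquivRight fun s => PLCP.lc_iff (PLCP.E n s) n
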